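/- Let E be a vector bundle of rank r and degree 0 on the projective line P^1 over an algebraically closed field of characteristic zero, equipped with a parabolic structure at points x in a finite set I, with weights 0 ≤ a_1(x) < ... < a_{σ_x}(x) < K. If (1/K)·Σ_{x∈I} a_{σ_x}(x) < 1/r and E is semistable as a parabolic bundle, then E is isomorphic to O_{P^1}^{⊕r} (i.e., E is homologically trivial). -/
import Mathlib


open Finset

/-- A rank `r`, degree `0` parabolic bundle on `P¹` (with splitting type `d` by Grothendieck's
theorem, marked points `x ∈ I` carrying flags with multiplicities `nm x i` and weights
`a x i < K`) which is parabolically semistable, under the weight condition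
`(1/K) Σ_x a_{σ_x}(x) < 1/r`, is homologically trivial: all summands are `O_{P¹}`,
i.e. `d i = 0` for all `i`.  Semistability is tested on subbundles (spanned by subsets `S` of
the line-bundle summands, with their induced parabolic structure `nF`). -/
theorem stmt0 (r n K : ℕ) (hr : 0 < r) (hn : 4 ≤ n) (hK : 0 < K)
    (σ : Fin n → ℕ) (hσ : ∀ x, 0 < σ x)
    (a : (x : Fin n) → Fin (σ x) → ℕ)
    (ha_mono : ∀ x, StrictMono (a x))
    (ha_lt : ∀ x i, a x i < K)
    (nm : (x : Fin n) → Fin (σ x) → ℕ)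
    (hnm : ∀ x, ∑ i, nm x i = r)
    (d : Fin r → ℤ) (hdeg : ∑ i, d i = 0)
    (hweight : (∑ x, (a x ⟨σ x - 1, Nat.sub_lt (hσ x) Nat.one_pos⟩ : ℚ)) / K < 1 / r)
    (hss : ∀ S : Finset (Fin r), S.Nonempty → S ≠ Finset.univ →
      ∃ nF : (x : Fin n) → Fin (σ x) → ℕ,
        (∀ x i, nF x i ≤ nm x i) ∧ (∀ x, ∑ i, nF x i = S.card) ∧
        ((∑ i ∈ S, (d i : ℚ)) + (∑ x, ∑ i, (a x i : ℚ) * nF x i) / K) / S.card ≤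
          ((∑ x, ∑ i, (a x i : ℚ) * nm x i) / K) / r) :
    ∀ i, d i = 0 := by

  intro i
  by_contra hi
  obtain ⟨i₀, -, hi₀⟩ := Finset.exists_max_image (Finset.univ : Finset (Fin r)) d
    ⟨i, Finset.mem_univ i⟩
  have hpos : 0 < d i₀ := by
    by_contra hle
    push_neg at hle
    have hall : ∀ j ∈ Finset.univ, d j ≤ 0 := fun j _ =>
      le_trans (hi₀ j (Finset.mem_univ j)) hle
    exact hi ((Finset.sum_eq_zero_iff_of_nonpos hall).mp hdeg i (Finset.mem_univ i))
  have hne : ({i₀} : Finset (Fin r)) ≠ Finset.univ := by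
    intro h
    rw [← h, Finset.sum_singleton] at hdeg
    omega
  obtain ⟨nF, hnF1, hnF2, hineq⟩ := hss {i₀} ⟨i₀, Finset.mem_singleton_self i₀⟩ hne
  rw [Finset.card_singleton, Finset.sum_singleton] at hineq
  simp only [Nat.cast_one, div_one] at hineq
  have hT : (0:ℚ) ≤ (∑ x, ∑ j, (a x j : ℚ) * nF x j) / K := by positivity
  -- bound the right-hand side
  have hRHS : ((∑ x, ∑ j, (a x j : ℚ) * nm x j) / K) / r
      ≤ (∑ x, (a x ⟨σ x - 1, Nat.sub_lt (hσ x) Nat.one_pos⟩ : ℚ)) / K := by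
    have hK' : (0:ℚ) < K := by exact_mod_cast hK
    have hr' : (0:ℚ) < r := by exact_mod_cast hr
    rw [div_div, div_le_div_iff₀ (by positivity) hK']
    have hbound : ∑ x, ∑ j, (a x j : ℚ) * nm x j
        ≤ ∑ x, (a x ⟨σ x - 1, Nat.sub_lt (hσ x) Nat.one_pos⟩ : ℚ) * r := by
      refine Finset.sum_le_sum fun x _ => ?_
      calc ∑ j, (a x j : ℚ) * nm x j
          ≤ ∑ j, (a x ⟨σ x - 1, Nat.sub_lt (hσ x) Nat.one_pos⟩ : ℚ) * nm x j := by
            refine Finset.sum_le_sum fun j _ => ?_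
            have hle : a x j ≤ a x ⟨σ x - 1, Nat.sub_lt (hσ x) Nat.one_pos⟩ :=
              (ha_mono x).monotone (by
                rw [Fin.le_def]
                have := j.isLt
                simp only []
                omega)
            have : (a x j : ℚ) ≤ (a x ⟨σ x - 1, Nat.sub_lt (hσ x) Nat.one_pos⟩ : ℚ) := by
              exact_mod_cast hle
            exact mul_le_mul_of_nonneg_right this (by positivity)
        _ = (a x ⟨σ x - 1, Nat.sub_lt (hσ x) Nat.one_pos⟩ : ℚ) * r := by
            rw [← Finset.mul_sum]
            congr 1
            exact_mod_cast congrArg (Nat.cast : ℕ → ℚ) (hnm x)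
    calc (∑ x, ∑ j, (a x j : ℚ) * nm x j) * K
        ≤ (∑ x, (a x ⟨σ x - 1, Nat.sub_lt (hσ x) Nat.one_pos⟩ : ℚ) * r) * K :=
          mul_le_mul_of_nonneg_right hbound hK'.le
      _ = (∑ x, (a x ⟨σ x - 1, Nat.sub_lt (hσ x) Nat.one_pos⟩ : ℚ)) * (K * r) := by
          rw [Finset.sum_mul, Finset.sum_mul]
          exact Finset.sum_congr rfl fun x _ => by ring
  have h1r : (1:ℚ) / r ≤ 1 := by
    have hr' : (1:ℚ) ≤ r := by exact_mod_cast hr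
    rw [div_le_one (by positivity)]
    exact hr'
  have hfinal : (d i₀ : ℚ) < 1 := by
    calc (d i₀ : ℚ) ≤ (d i₀ : ℚ) + (∑ x, ∑ j, (a x j : ℚ) * nF x j) / K := le_add_of_nonneg_right hT
      _ ≤ ((∑ x, ∑ j, (a x j : ℚ) * nm x j) / K) / r := hineq
      _ ≤ (∑ x, (a x ⟨σ x - 1, Nat.sub_lt (hσ x) Nat.one_pos⟩ : ℚ)) / K := hRHS
      _ < 1 / r := hweight
      _ ≤ 1 := h1r
  have : (1:ℚ) ≤ (d i₀ : ℚ) := by exact_mod_cast hpos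
  linarith
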